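/- Let G = G(n;S) be a circulant graph on n ≥ 4 vertices with symbol S, and let λ_0, λ_1, ..., λ_{n−1} be its eigenvalues, λ_j = Σ_{s∈S} exp(2πi js/n). Suppose G has at least four distinct eigenvalues and that for every quadruple of eigenvalues λ_i, λ_j, λ_r, λ_s with λ_r ≠ λ_s the ratio (λ_i − λ_j)/(λ_r − λ_s) is rational. Then every eigenvalue of G is an integer (i.e., G is integral). -/

import Mathlib

open Complex Real

lemma zmod_sum_val_aux (n : ℕ) [NeZero n] (f : ℕ → ℂ) :
    ∑ j : ZMod n, f (ZMod.val j) = ∑ k ∈ Finset.range n, f k := by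
  obtain ⟨m, rfl⟩ : ∃ m, n = m + 1 := ⟨n - 1, by have := NeZero.pos n; omega⟩
  exact Fin.sum_univ_eq_sum_range (fun k => f k) (m + 1)

/-- Let `G = G(n;S)` be a circulant graph on `n ≥ 4` vertices
with symbol `S` and eigenvalues `λ_j = ∑_{s ∈ S} exp(2πi·j·s/n)`. If `G` has at
least four distinct eigenvalues and `(λ_i - λ_j)/(λ_r - λ_s) ∈ ℚ` for every
quadruple with `λ_r ≠ λ_s`, then every eigenvalue of `G` is an integer. -/
theorem stmt_2 (n : ℕ) (hn : 4 ≤ n) (S : Finset ℕ)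
    (hS1 : ∀ s ∈ S, 1 ≤ s ∧ s ≤ n - 1)
    (hS2 : ∀ s ∈ S, n - s ∈ S)
    (lam : ZMod n → ℂ)
    (hlam : ∀ j : ZMod n, lam j = ∑ s ∈ S, Complex.exp (2 * π * I * j.val * s / n))
    (hfour : ∃ a b c d : ZMod n, lam a ≠ lam b ∧ lam a ≠ lam c ∧ lam a ≠ lam d ∧
      lam b ≠ lam c ∧ lam b ≠ lam d ∧ lam c ≠ lam d)
    (hratio : ∀ i j r s : ZMod n, lam r ≠ lam s →
      ∃ q : ℚ, lam i - lam j = (q : ℂ) * (lam r - lam s)) :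
    ∀ j : ZMod n, ∃ m : ℤ, lam j = m := by
  haveI : NeZero n := ⟨by omega⟩
  have hn0 : (n:ℂ) ≠ 0 := Nat.cast_ne_zero.mpr (by omega)
  -- every eigenvalue is an algebraic integer
  have hint : ∀ j : ZMod n, IsIntegral ℤ (lam j) := by
    intro j
    rw [hlam]
    refine IsIntegral.sum _ fun s _ => ?_
    refine IsIntegral.of_pow (by omega : 0 < n) ?_
    have hpow : Complex.exp (2 * π * I * j.val * s / n) ^ n = 1 := by
      rw [← Complex.exp_nat_mul]
      have : (n:ℂ) * (2 * π * I * j.val * s / n) = ((j.val * s : ℕ) : ℤ) * (2 * π * I) := by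
        push_cast; field_simp
      rw [this, Complex.exp_int_mul_two_pi_mul_I]
    rw [hpow]; exact isIntegral_one
  -- lam 0 = |S|
  have h0 : lam 0 = (S.card : ℂ) := by
    rw [hlam]
    have h1 : ∀ s ∈ S, Complex.exp (2 * π * I * (0 : ZMod n).val * s / n) = 1 := by
      intro s _; simp [ZMod.val_zero]
    rw [Finset.sum_congr rfl h1, Finset.sum_const, nsmul_eq_mul, mul_one]
  -- sum of all eigenvalues is 0
  have hsum : ∑ j : ZMod n, lam j = 0 := by
    have hswap : ∑ j : ZMod n, lam j
        = ∑ s ∈ S, ∑ j : ZMod n, Complex.exp (2 * π * I * j.val * s / n) := by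
      simp_rw [hlam]; rw [Finset.sum_comm]
    rw [hswap]
    refine Finset.sum_eq_zero fun s hs => ?_
    set ζ := Complex.exp (2 * π * I * s / n) with hζ
    have hterm : ∀ j : ZMod n, Complex.exp (2 * π * I * j.val * s / n) = ζ ^ (ZMod.val j) := by
      intro j
      rw [hζ, ← Complex.exp_nat_mul]
      congr 1
      field_simp
    have hζn : ζ ^ n = 1 := by
      rw [hζ, ← Complex.exp_nat_mul]
      have : (n:ℂ) * (2 * π * I * s / n) = ((s : ℕ) : ℤ) * (2 * π * I) := by
        push_cast; field_simp
      rw [this, Complex.exp_int_mul_two_pi_mul_I]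
    have hsb := hS1 s hs
    have hζ1 : ζ ≠ 1 := by
      intro h
      rw [hζ, Complex.exp_eq_one_iff] at h
      obtain ⟨k, hk⟩ := h
      have h2 : (2 * (π:ℂ) * I) ≠ 0 := by
        simp [Real.pi_ne_zero, Complex.I_ne_zero]
      have hk' : 2 * (π:ℂ) * I * s = (k:ℂ) * (2 * π * I) * n := by
        field_simp at hk; linear_combination (2 * (π:ℂ) * I) * hk
      have hs' : (s:ℂ) = (k:ℂ) * n := by
        apply mul_left_cancel₀ h2
        linear_combination hk'
      have hsz : (s:ℤ) = k * n := by exact_mod_cast hs'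
      have h1 : (1:ℤ) ≤ s := by exact_mod_cast hsb.1
      have h2' : (s:ℤ) < n := by
        have : s ≤ n - 1 := hsb.2
        omega
      have hnz : (0:ℤ) < n := by exact_mod_cast (by omega : 0 < n)
      rcases le_or_gt k 0 with hk0 | hk0
      · nlinarith
      · have : (1:ℤ) ≤ k := hk0
        nlinarith
    rw [Finset.sum_congr rfl fun j _ => hterm j, zmod_sum_val_aux n (fun k => ζ ^ k),
      geom_sum_eq hζ1, hζn]
    simp
  -- the ratio machinery
  obtain ⟨a, b, c, d, hab, -, -, -, -, -⟩ := hfour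
  choose q hq using fun j => hratio j 0 a b hab
  set δ := lam a - lam b with hδ
  have hδ0 : δ ≠ 0 := sub_ne_zero.mpr hab
  have hsum2 : (n:ℂ) * lam 0 + (∑ j : ZMod n, (q j : ℂ)) * δ = 0 := by
    have he : ∑ j : ZMod n, lam j = ∑ j : ZMod n, (lam 0 + (q j : ℂ) * δ) :=
      Finset.sum_congr rfl fun j _ => by linear_combination hq j
    rw [he, Finset.sum_add_distrib, Finset.sum_const, Finset.card_univ, ZMod.card,
      ← Finset.sum_mul, nsmul_eq_mul] at hsum
    exact hsum
  intro j
  by_cases hQ : (∑ j : ZMod n, q j) = 0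
  · exfalso
    have hQ' : (∑ j : ZMod n, (q j : ℂ)) = 0 := by
      have := congrArg (fun x : ℚ => (x : ℂ)) hQ; push_cast at this; simpa using this
    rw [hQ', zero_mul, add_zero] at hsum2
    have hl0 : lam 0 = 0 := (mul_eq_zero.mp hsum2).resolve_left hn0
    rw [h0] at hl0
    have hScard : S.card = 0 := by exact_mod_cast hl0
    have hSe : S = ∅ := Finset.card_eq_zero.mp hScard
    apply hab
    rw [hlam a, hlam b, hSe]
    simp
  · -- δ is rational
    set r : ℚ := -((n : ℚ) * S.card) / (∑ j : ZMod n, q j) with hr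
    have hQc : ((∑ j : ZMod n, q j : ℚ) : ℂ) ≠ 0 := Rat.cast_ne_zero.mpr hQ
    have hQcast : ((∑ j : ZMod n, q j : ℚ) : ℂ) = ∑ j : ZMod n, (q j : ℂ) := by push_cast; rfl
    have hQc' : (∑ j : ZMod n, (q j : ℂ)) ≠ 0 := hQcast ▸ hQc
    have key : (∑ j : ZMod n, (q j : ℂ)) * δ = -((n:ℂ) * S.card) := by
      rw [h0] at hsum2; linear_combination hsum2
    have hδr : δ = (r : ℂ) := by
      rw [hr]
      push_cast
      rw [eq_div_iff hQc']
      linear_combination key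
    have hjq : lam j = ((S.card + q j * r : ℚ) : ℂ) := by
      push_cast
      rw [← hδr, ← h0]
      linear_combination hq j
    have hji : IsIntegral ℤ ((S.card : ℚ) + q j * r) := by
      have h1 := hint j
      rw [hjq, show ((((S.card:ℚ) + q j * r) : ℚ) : ℂ) = algebraMap ℚ ℂ _ from (eq_ratCast _ _).symm] at h1
      exact (isIntegral_algebraMap_iff (algebraMap ℚ ℂ).injective).mp h1
    obtain ⟨m, hm⟩ := IsIntegrallyClosed.isIntegral_iff.mp hji
    refine ⟨m, ?_⟩
    rw [hjq, ← hm]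
    simp
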